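/- Let g : ℝ → ℝ be C¹ with |g| ≤ M and |g'| ≤ N. For ε > 0 let f solve the ODE f'' + f = g(εt) with zero initial data f(0) = f'(0) = 0. Then there exists a constant C = C(M,N) such that the energy E(t) = (f(t)² + f'(t)²)/2 satisfies E(t) ≤ C for all 0 ≤ t ≤ 1/ε. -/

import Mathlib

/-- Averaging lemma: a slowly varying forcing `g(εt)` with `|g| ≤ M`, `|g'| ≤ N`
influences the harmonic oscillator `f'' + f = g(εt)`, `f(0) = f'(0) = 0`, so that
the energy `E(t) = (f(t)² + f'(t)²)/2` stays bounded by a constant `C = C(M,N)`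
on the time interval `[0, 1/ε]`. -/
theorem stmt1 (M N : ℝ) :
    ∃ C : ℝ, ∀ (g f : ℝ → ℝ) (ε : ℝ), 0 < ε →
      ContDiff ℝ 1 g → (∀ t, |g t| ≤ M) → (∀ t, |deriv g t| ≤ N) →
      ContDiff ℝ 2 f →
      (∀ t, deriv (deriv f) t + f t = g (ε * t)) →
      f 0 = 0 → deriv f 0 = 0 →
      ∀ t ∈ Set.Icc (0:ℝ) (1/ε), ((f t) ^ 2 + (deriv f t) ^ 2) / 2 ≤ C := by
  refine ⟨(4 * M + 2 * N) ^ 2 / 2 + 1, ?_⟩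
  intro g f ε hε hg hgM hgN hf hode hf0 hf'0 t ht
  have hM : 0 ≤ M := le_trans (abs_nonneg _) (hgM 0)
  have hN : 0 ≤ N := le_trans (abs_nonneg _) (hgN 0)
  -- differentiability facts
  have hf2 : Differentiable ℝ f ∧ ContDiff ℝ 1 (deriv f) := by
    rw [show (2 : WithTop ℕ∞) = 1 + 1 from rfl, contDiff_succ_iff_deriv] at hf
    exact ⟨hf.1, hf.2.2⟩
  have hfd : Differentiable ℝ f := hf2.1
  have hfd' : Differentiable ℝ (deriv f) := hf2.2.differentiable one_ne_zero
  have hgd : Differentiable ℝ g := hg.differentiable one_ne_zero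
  have hgc : Continuous g := hgd.continuous
  have hg'c : Continuous (deriv g) := (contDiff_one_iff_deriv.mp hg).2
  have hfc : Continuous f := hfd.continuous
  have hf'c : Continuous (deriv f) := hfd'.continuous
  set φ : ℝ → ℝ := fun s => Real.sqrt ((f s) ^ 2 + (deriv f s) ^ 2) with hφdef
  have hφnn : ∀ s, 0 ≤ φ s := fun s => Real.sqrt_nonneg _
  have hφc : Continuous φ := by
    exact Real.continuous_sqrt.comp ((hfc.pow 2).add (hf'c.pow 2))
  have hφsq : ∀ s, φ s ^ 2 = (f s) ^ 2 + (deriv f s) ^ 2 := fun s =>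
    Real.sq_sqrt (by positivity)
  have hfφ : ∀ s, |f s| ≤ φ s := by
    intro s
    rw [← Real.sqrt_sq_eq_abs]
    exact Real.sqrt_le_sqrt (by nlinarith [sq_nonneg (deriv f s)])
  have hf'φ : ∀ s, |deriv f s| ≤ φ s := by
    intro s
    rw [← Real.sqrt_sq_eq_abs]
    exact Real.sqrt_le_sqrt (by nlinarith [sq_nonneg (f s)])
  set I : ℝ → ℝ := fun T => ∫ s in (0:ℝ)..T, φ s with hIdef
  have hInn : ∀ T, 0 ≤ T → 0 ≤ I T := by
    intro T hT
    exact intervalIntegral.integral_nonneg hT (fun s _ => hφnn s)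
  -- key energy identity via integration by parts
  have key : ∀ T, 0 ≤ T →
      ((f T) ^ 2 + (deriv f T) ^ 2) / 2 ≤ M * φ T + ε * N * I T := by
    intro T hT
    -- energy derivative
    have hE : ∀ s, HasDerivAt (fun u => ((f u) ^ 2 + (deriv f u) ^ 2) / 2)
        (deriv f s * g (ε * s)) s := by
      intro s
      have h1 : HasDerivAt f (deriv f s) s := (hfd s).hasDerivAt
      have h2 : HasDerivAt (deriv f) (deriv (deriv f) s) s := (hfd' s).hasDerivAt
      have : HasDerivAt (fun u => ((f u) ^ 2 + (deriv f u) ^ 2) / 2)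
          ((2 * f s ^ 1 * deriv f s + 2 * deriv f s ^ 1 * deriv (deriv f) s) / 2) s := by
        exact (((h1.pow 2).add (h2.pow 2)).div_const 2)
      convert this using 1
      have h := hode s
      have h2 : deriv (deriv f) s = g (ε * s) - f s := by linarith
      rw [h2]; ring
    -- product rule for f * g(ε ·)
    have hP : ∀ s, HasDerivAt (fun u => f u * g (ε * u))
        (deriv f s * g (ε * s) + f s * (deriv g (ε * s) * ε)) s := by
      intro s
      have h1 : HasDerivAt f (deriv f s) s := (hfd s).hasDerivAt
      have h3 : HasDerivAt (fun u => g (ε * u)) (deriv g (ε * s) * ε) s := by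
        have := ((hgd (ε * s)).hasDerivAt).comp s
          (((hasDerivAt_id s).const_mul ε))
        simpa [mul_comm, Function.comp_def] using this
      exact h1.mul h3
    have hint1 : IntervalIntegrable (fun s => deriv f s * g (ε * s)) MeasureTheory.volume 0 T :=
      (hf'c.mul (hgc.comp (continuous_const.mul continuous_id))).intervalIntegrable 0 T
    have hint2 : IntervalIntegrable (fun s => f s * (deriv g (ε * s) * ε))
        MeasureTheory.volume 0 T :=
      (hfc.mul ((hg'c.comp (continuous_const.mul continuous_id)).mul
        continuous_const)).intervalIntegrable 0 T
    have hEeq : ((f T) ^ 2 + (deriv f T) ^ 2) / 2 =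
        ∫ s in (0:ℝ)..T, deriv f s * g (ε * s) := by
      have := intervalIntegral.integral_eq_sub_of_hasDerivAt
        (fun s _ => hE s) hint1
      rw [this, hf0, hf'0]
      ring
    have hPeq : f T * g (ε * T) =
        (∫ s in (0:ℝ)..T, deriv f s * g (ε * s)) +
        ∫ s in (0:ℝ)..T, f s * (deriv g (ε * s) * ε) := by
      have h := intervalIntegral.integral_eq_sub_of_hasDerivAt
        (fun s _ => hP s) (hint1.add hint2)
      rw [intervalIntegral.integral_add hint1 hint2] at h
      simp only [hf0, zero_mul, sub_zero] at h
      linarith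
    have habs : |∫ s in (0:ℝ)..T, f s * (deriv g (ε * s) * ε)| ≤ ε * N * I T := by
      calc |∫ s in (0:ℝ)..T, f s * (deriv g (ε * s) * ε)|
          ≤ ∫ s in (0:ℝ)..T, |f s * (deriv g (ε * s) * ε)| :=
            intervalIntegral.abs_integral_le_integral_abs hT
        _ ≤ ∫ s in (0:ℝ)..T, ε * N * φ s := by
            apply intervalIntegral.integral_mono_on hT (hint2.abs)
              ((continuous_const.mul hφc).intervalIntegrable 0 T)
            intro s _
            rw [abs_mul, abs_mul]
            have h1 := hfφ s
            have h2 := hgN (ε * s)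
            have h3 : |ε| = ε := abs_of_pos hε
            rw [h3]
            calc |f s| * (|deriv g (ε * s)| * ε) ≤ φ s * (N * ε) := by
                  apply mul_le_mul h1 (by nlinarith) (by positivity) (hφnn s)
              _ = ε * N * φ s := by ring
        _ = ε * N * I T := by
            rw [hIdef]
            exact intervalIntegral.integral_const_mul _ _
    have hPb : f T * g (ε * T) ≤ M * φ T := by
      calc f T * g (ε * T) ≤ |f T * g (ε * T)| := le_abs_self _
        _ = |f T| * |g (ε * T)| := abs_mul _ _
        _ ≤ φ T * M := mul_le_mul (hfφ T) (hgM _) (abs_nonneg _) (hφnn T)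
        _ = M * φ T := mul_comm _ _
    have : ((f T) ^ 2 + (deriv f T) ^ 2) / 2 =
        f T * g (ε * T) - ∫ s in (0:ℝ)..T, f s * (deriv g (ε * s) * ε) := by
      rw [hEeq]; linarith [hPeq]
    rw [this]
    have := abs_le.mp habs
    linarith
  -- pointwise bound φ ≤ 2M + N + (ε/2) I
  have hφbound : ∀ T, 0 ≤ T → φ T ≤ 2 * M + N + (ε / 2) * I T := by
    intro T hT
    have h1 := key T hT
    have h2 := hφsq T
    have h3 := hφnn T
    have h4 := hInn T hT
    have hr : 0 ≤ (ε / 2) * I T := mul_nonneg (by positivity) h4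
    have h5 : 0 ≤ φ T + N + (ε / 2) * I T := by linarith
    nlinarith [sq_nonneg (N - (ε / 2) * I T), mul_nonneg hM hN, mul_nonneg hM hr, h5]
  -- Gronwall for I
  have hIderiv : ∀ x, HasDerivAt I (φ x) x := by
    intro x
    exact (hφc.integral_hasStrictDerivAt 0 x).hasDerivAt
  have hIcont : ContinuousOn I (Set.Icc 0 (1/ε)) := by
    intro x _
    exact (hIderiv x).continuousAt.continuousWithinAt
  have hgron := norm_le_gronwallBound_of_norm_deriv_right_le (f := I) (f' := φ)
    (δ := 0) (K := ε / 2) (ε := 2 * M + N) (a := 0) (b := 1/ε)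
    hIcont
    (fun x _ => (hIderiv x).hasDerivWithinAt)
    (by simp [hIdef])
    (by
      intro x hx
      have h0x : 0 ≤ x := hx.1
      rw [Real.norm_eq_abs, Real.norm_eq_abs, abs_of_nonneg (hφnn x),
        abs_of_nonneg (hInn x h0x)]
      linarith [hφbound x h0x])
  have hIt := hgron t ht
  rw [Real.norm_eq_abs, abs_of_nonneg (hInn t ht.1), sub_zero] at hIt
  have hKne : (ε / 2) ≠ 0 := by positivity
  rw [gronwallBound_of_K_ne_0 hKne] at hIt
  simp only [zero_mul, zero_add] at hIt
  -- exp(ε/2 * t) ≤ exp(1/2) ≤ 2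
  have hexp : Real.exp (ε / 2 * t) ≤ 2 := by
    have h1 : ε / 2 * t ≤ 1 / 2 := by
      have h2 : t * ε ≤ 1 := (le_div_iff₀ hε).mp ht.2
      nlinarith
    calc Real.exp (ε / 2 * t) ≤ Real.exp (1/2) := Real.exp_le_exp.mpr h1
      _ ≤ 2 := by
        have hsq : Real.exp (1/2) * Real.exp (1/2) = Real.exp 1 := by
          rw [← Real.exp_add]; norm_num
        nlinarith [Real.exp_one_lt_d9, Real.exp_pos (1/2)]
  have hIb : (ε / 2) * I t ≤ 2 * M + N := by
    have h2MN : 0 ≤ 2 * M + N := by linarith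
    have : I t ≤ (2 * M + N) / (ε / 2) * (Real.exp (ε / 2 * t) - 1) := hIt
    have h3 : (2 * M + N) / (ε / 2) * (Real.exp (ε / 2 * t) - 1) ≤
        (2 * M + N) / (ε / 2) * 1 := by
      apply mul_le_mul_of_nonneg_left (by linarith) (by positivity)
    have h4 : (ε / 2) * ((2 * M + N) / (ε / 2) * 1) = 2 * M + N := by
      field_simp
    nlinarith [mul_le_mul_of_nonneg_left (le_trans this h3) (le_of_lt (half_pos hε))]
  have hφt : φ t ≤ 4 * M + 2 * N := by
    have := hφbound t ht.1
    linarith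
  have hEt : ((f t) ^ 2 + (deriv f t) ^ 2) / 2 ≤ (4 * M + 2 * N) ^ 2 / 2 := by
    have h2 := hφsq t
    have h3 := hφnn t
    nlinarith
  linarith
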